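/- Let H be a real Hilbert space, m ≥ 1, and let R_1, …, R_m be orthogonal projections on H. Then for every f ∈ H, ‖R_m f − f‖² ≤ 4 m (‖f‖² − ‖R_m R_{m−1} ⋯ R_1 f‖²). -/

import Mathlib

open scoped RealInnerProductSpace

/-- A bounded operator on a real Hilbert space is an orthogonal projection if it is
self-adjoint and idempotent. -/
def IsOrthProj {H : Type*} [NormedAddCommGroup H] [InnerProductSpace ℝ H]
    (P : H →L[ℝ] H) : Prop :=
  (∀ x y : H, ⟪P x, y⟫ = ⟪x, P y⟫) ∧ ∀ x : H, P (P x) = P x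

lemma orthproj_pyth {H : Type*} [NormedAddCommGroup H] [InnerProductSpace ℝ H]
    {P : H →L[ℝ] H} (hP : IsOrthProj P) (x : H) :
    ‖P x‖ ^ 2 + ‖x - P x‖ ^ 2 = ‖x‖ ^ 2 := by
  have horth : ⟪P x, x - P x⟫ = 0 := by
    have h1 : ⟪P x, P x⟫ = ⟪P x, x⟫ := by
      rw [hP.1 x (P x), hP.2, real_inner_comm]
    rw [inner_sub_right, h1, sub_self]
  have h := norm_add_sq_real (P x) (x - P x)
  rw [horth] at h
  have hx : P x + (x - P x) = x := by abel
  rw [hx] at h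
  linarith

lemma orthproj_norm_le {H : Type*} [NormedAddCommGroup H] [InnerProductSpace ℝ H]
    {P : H →L[ℝ] H} (hP : IsOrthProj P) (x : H) : ‖P x‖ ≤ ‖x‖ := by
  have h := orthproj_pyth hP x
  by_contra hc
  push_neg at hc
  nlinarith [sq_nonneg ‖x - P x‖, norm_nonneg x, norm_nonneg (P x)]

/-- For orthogonal projections `R_1, …, R_m` (`m ≥ 1`), one has
`‖R_m f - f‖² ≤ 4 m (‖f‖² - ‖R_m ⋯ R_1 f‖²)` for every `f`. -/
theorem last_projection_movement_bound
    {H : Type*} [NormedAddCommGroup H] [InnerProductSpace ℝ H] [CompleteSpace H]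
    (m : ℕ) (hm : 1 ≤ m) (R : Fin m → H →L[ℝ] H)
    (hR : ∀ j, IsOrthProj (R j)) (f : H) :
    ‖R ⟨m - 1, by omega⟩ f - f‖ ^ 2 ≤
      4 * m * (‖f‖ ^ 2 - ‖((List.ofFn R).reverse).prod f‖ ^ 2) := by
  -- iterates
  set g : ℕ → H := fun n => Nat.rec f
    (fun n gn => if h : n < m then R ⟨n, h⟩ gn else gn) n with hg
  have hg0 : g 0 = f := rfl
  have hgs : ∀ n (h : n < m), g (n + 1) = R ⟨n, h⟩ (g n) := by
    intro n h
    simp [hg, dif_pos h]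
  -- product equals g m
  have hprod : ∀ n ≤ m, (((List.ofFn R).take n).reverse).prod f = g n := by
    intro n hn
    induction n with
    | zero => simp [hg0]
    | succ k ih =>
      have hk : k < m := by omega
      have htake : (List.ofFn R).take (k + 1) = (List.ofFn R).take k ++ [R ⟨k, hk⟩] := by
        rw [List.take_succ]
        simp [List.getElem?_ofFn, hk]
      rw [htake, List.reverse_append, List.reverse_singleton, List.singleton_append,
        List.prod_cons, ContinuousLinearMap.mul_apply, ih (by omega), hgs k hk]
  have hprodm : ((List.ofFn R).reverse).prod f = g m := by
    have := hprod m le_rfl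
    rwa [List.take_of_length_le (by simp)] at this
  -- telescoping sum
  have hstep : ∀ n (h : n < m),
      ‖g (n + 1) - g n‖ ^ 2 = ‖g n‖ ^ 2 - ‖g (n + 1)‖ ^ 2 := by
    intro n h
    have := orthproj_pyth (hR ⟨n, h⟩) (g n)
    rw [← hgs n h] at this
    have hns : ‖g n - g (n + 1)‖ = ‖g (n + 1) - g n‖ := norm_sub_rev _ _
    rw [hns] at this
    linarith
  have hsum : ∑ j ∈ Finset.range m, ‖g (j + 1) - g j‖ ^ 2 = ‖f‖ ^ 2 - ‖g m‖ ^ 2 := by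
    have : ∑ j ∈ Finset.range m, ‖g (j + 1) - g j‖ ^ 2
        = ∑ j ∈ Finset.range m, (‖g j‖ ^ 2 - ‖g (j + 1)‖ ^ 2) := by
      apply Finset.sum_congr rfl
      intro j hj
      exact hstep j (Finset.mem_range.mp hj)
    rw [this]
    have := Finset.sum_range_sub (fun j => ‖g j‖ ^ 2) m
    have h2 : ∑ j ∈ Finset.range m, (‖g j‖ ^ 2 - ‖g (j + 1)‖ ^ 2)
        = -∑ j ∈ Finset.range m, (‖g (j + 1)‖ ^ 2 - ‖g j‖ ^ 2) := by
      rw [← Finset.sum_neg_distrib]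
      apply Finset.sum_congr rfl; intro j _; ring
    rw [h2, this, hg0]
    ring
  -- path bound : ‖f - g (m-1)‖ ≤ partial sum
  have hpath : ∀ n ≤ m, ‖f - g n‖ ≤ ∑ j ∈ Finset.range n, ‖g (j + 1) - g j‖ := by
    intro n hn
    induction n with
    | zero => simp [hg0]
    | succ k ih =>
      calc ‖f - g (k + 1)‖ ≤ ‖f - g k‖ + ‖g k - g (k + 1)‖ := norm_sub_le_norm_sub_add_norm_sub _ _ _
        _ ≤ (∑ j ∈ Finset.range k, ‖g (j + 1) - g j‖) + ‖g (k + 1) - g k‖ := by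
            rw [norm_sub_rev (g k)]
            exact add_le_add (ih (by omega)) le_rfl
        _ = ∑ j ∈ Finset.range (k + 1), ‖g (j + 1) - g j‖ := (Finset.sum_range_succ _ _).symm
  -- main chain bound
  have hlt : m - 1 < m := by omega
  set P := R ⟨m - 1, hlt⟩ with hP
  have hm1 : m - 1 + 1 = m := by omega
  have hchain : ‖P f - f‖ ≤ 2 * ∑ j ∈ Finset.range m, ‖g (j + 1) - g j‖ := by
    have h1 : ‖P f - f‖ ≤ ‖P f - P (g (m - 1))‖ + ‖P (g (m - 1)) - g (m - 1)‖
        + ‖g (m - 1) - f‖ := by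
      have := norm_sub_le_norm_sub_add_norm_sub (P f) (P (g (m - 1))) f
      have h2 := norm_sub_le_norm_sub_add_norm_sub (P (g (m - 1))) (g (m - 1)) f
      linarith
    have h2 : ‖P f - P (g (m - 1))‖ ≤ ‖f - g (m - 1)‖ := by
      rw [← map_sub]
      exact orthproj_norm_le (hR _) _
    have h3 : ‖P (g (m - 1)) - g (m - 1)‖ = ‖g m - g (m - 1)‖ := by
      rw [← hgs (m - 1) hlt, hm1]
    have h4 : ‖g (m - 1) - f‖ = ‖f - g (m - 1)‖ := norm_sub_rev _ _
    have h5 := hpath (m - 1) (by omega)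
    have hsplit : ∑ j ∈ Finset.range m, ‖g (j + 1) - g j‖
        = (∑ j ∈ Finset.range (m - 1), ‖g (j + 1) - g j‖) + ‖g m - g (m - 1)‖ := by
      conv_lhs => rw [← hm1, Finset.sum_range_succ, hm1]
    have hlast : (0:ℝ) ≤ ‖g m - g (m - 1)‖ := norm_nonneg _
    linarith
  -- Cauchy-Schwarz
  have hCS : (∑ j ∈ Finset.range m, ‖g (j + 1) - g j‖) ^ 2
      ≤ m * ∑ j ∈ Finset.range m, ‖g (j + 1) - g j‖ ^ 2 := by
    have := sq_sum_le_card_mul_sum_sq (s := Finset.range m)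
      (f := fun j => ‖g (j + 1) - g j‖)
    simpa using this
  have hnn : (0:ℝ) ≤ ‖P f - f‖ := norm_nonneg _
  have hS : (0:ℝ) ≤ ∑ j ∈ Finset.range m, ‖g (j + 1) - g j‖ :=
    Finset.sum_nonneg fun _ _ => norm_nonneg _
  have hfinal : ‖P f - f‖ ^ 2 ≤ 4 * m * (‖f‖ ^ 2 - ‖g m‖ ^ 2) := by
    have h1 : ‖P f - f‖ ^ 2 ≤ (2 * ∑ j ∈ Finset.range m, ‖g (j + 1) - g j‖) ^ 2 := by
      nlinarith
    nlinarith
  rw [hprodm]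
  exact hfinal
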